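/- The chromatic number is stable under 2-switch: for every simple graph G on a finite vertex set V and every graph G' obtained from G by a 2-switch, |χ(G') − χ(G)| ≤ 1. -/

import Mathlib

open SimpleGraph

/-- Four pairwise distinct vertices `a,b,c,d` with `ab, cd ∈ E(G)` and `ac, bd ∉ E(G)`:
the condition under which the 2-switch of `G` at `(a,b;c,d)` is performed. -/
def Switchable {V : Type*} (G : SimpleGraph V) (a b c d : V) : Prop :=
  a ≠ b ∧ a ≠ c ∧ a ≠ d ∧ b ≠ c ∧ b ≠ d ∧ c ≠ d ∧
    G.Adj a b ∧ G.Adj c d ∧ ¬ G.Adj a c ∧ ¬ G.Adj b d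

/-- The 2-switch of `G` at `(a,b;c,d)`: the graph on `V` with edge set
`(E(G) \ {ab, cd}) ∪ {ac, bd}`. -/
def twoSwitch {V : Type*} (G : SimpleGraph V) (a b c d : V) : SimpleGraph V :=
  SimpleGraph.fromEdgeSet ((G.edgeSet \ {s(a, b), s(c, d)}) ∪ {s(a, c), s(b, d)})

/-- `G'` is obtained from `G` by a 2-switch. -/
def ObtainedByTwoSwitch {V : Type*} (G G' : SimpleGraph V) : Prop :=
  ∃ a b c d : V, Switchable G a b c d ∧ G' = twoSwitch G a b c d

lemma twoSwitch_edgeSet {V : Type*} {G : SimpleGraph V} {a b c d : V}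
    (h : Switchable G a b c d) :
    (twoSwitch G a b c d).edgeSet = (G.edgeSet \ {s(a, b), s(c, d)}) ∪ {s(a, c), s(b, d)} := by
  obtain ⟨hab, hac, had, hbc, hbd, hcd, -, -, -, -⟩ := h
  rw [twoSwitch, edgeSet_fromEdgeSet, sdiff_eq_left.2 (Set.disjoint_left.2 ?_)]
  rintro e (⟨hG, -⟩ | hm) he
  · exact (G.not_isDiag_of_mem_edgeSet hG) he
  · rcases hm with hm | hm <;> subst hm <;> simp_all [Sym2.isDiag_iff_proj_eq]

lemma sym2_ne {V : Type*} {a b c d : V} (h1 : a ≠ c ∨ b ≠ d) (h2 : a ≠ d ∨ b ≠ c) :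
    s(a, b) ≠ s(c, d) := by
  rw [Ne, Sym2.eq_iff]; tauto

lemma switchable_symm {V : Type*} {G : SimpleGraph V} {a b c d : V}
    (h : Switchable G a b c d) : Switchable (twoSwitch G a b c d) a c b d := by
  obtain ⟨hab, hac, had, hbc, hbd, hcd, Gab, Gcd, nGac, nGbd⟩ := h
  have hE := twoSwitch_edgeSet ⟨hab, hac, had, hbc, hbd, hcd, Gab, Gcd, nGac, nGbd⟩
  refine ⟨hac, hab, had, hbc.symm, hcd, hbd, ?_, ?_, ?_, ?_⟩
  · rw [← mem_edgeSet, hE]; right; left; rfl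
  · rw [← mem_edgeSet, hE]; right; right; rfl
  · rw [← mem_edgeSet, hE]
    rintro (⟨-, hne⟩ | (hm | hm))
    · exact hne (Or.inl rfl)
    · simp only [Set.mem_singleton_iff, Sym2.eq_iff] at hm; tauto
    · simp only [Set.mem_singleton_iff, Sym2.eq_iff] at hm; tauto
  · rw [← mem_edgeSet, hE]
    rintro (⟨-, hne⟩ | (hm | hm))
    · exact hne (Or.inr rfl)
    · simp only [Set.mem_singleton_iff, Sym2.eq_iff] at hm; tauto
    · simp only [Set.mem_singleton_iff, Sym2.eq_iff] at hm; tauto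

lemma twoSwitch_twoSwitch {V : Type*} {G : SimpleGraph V} {a b c d : V}
    (h : Switchable G a b c d) : twoSwitch (twoSwitch G a b c d) a c b d = G := by
  obtain ⟨hab, hac, had, hbc, hbd, hcd, Gab, Gcd, nGac, nGbd⟩ := h
  have hE := twoSwitch_edgeSet ⟨hab, hac, had, hbc, hbd, hcd, Gab, Gcd, nGac, nGbd⟩
  have hE2 := twoSwitch_edgeSet (switchable_symm ⟨hab, hac, had, hbc, hbd, hcd, Gab, Gcd, nGac, nGbd⟩)
  rw [← edgeSet_inj, hE2, hE]
  ext e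
  simp only [Set.mem_union, Set.mem_diff, Set.mem_insert_iff, Set.mem_singleton_iff, mem_edgeSet]
  constructor
  · rintro (⟨(⟨he, -⟩ | (hm | hm)), hne⟩ | (hm | hm))
    · exact he
    · exact absurd (Or.inl hm) hne
    · exact absurd (Or.inr hm) hne
    · exact hm ▸ Gab
    · exact hm ▸ Gcd
  · intro he
    by_cases h1 : e = s(a, b)
    · right; left; exact h1
    by_cases h2 : e = s(c, d)
    · right; right; exact h2
    left
    refine ⟨Or.inl ⟨he, fun h => h.elim h1 h2⟩, ?_⟩
    rintro (hm | hm)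
    · exact nGac ((G.mem_edgeSet).1 (hm ▸ he))
    · exact nGbd ((G.mem_edgeSet).1 (hm ▸ he))

lemma obtained_symm {V : Type*} {G G' : SimpleGraph V}
    (h : ObtainedByTwoSwitch G G') : ObtainedByTwoSwitch G' G := by
  obtain ⟨a, b, c, d, hs, rfl⟩ := h
  exact ⟨a, c, b, d, switchable_symm hs, (twoSwitch_twoSwitch hs).symm⟩

lemma colorable_step {V : Type*} {G : SimpleGraph V} {a b c d : V} {n : ℕ}
    (h : Switchable G a b c d) (hc : G.Colorable n) :
    (twoSwitch G a b c d).Colorable (n + 1) := by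
  classical
  obtain ⟨C⟩ := hc
  obtain ⟨hab, hac, had, hbc, hbd, hcd, Gab, Gcd, nGac, nGbd⟩ := h
  have hE := twoSwitch_edgeSet ⟨hab, hac, had, hbc, hbd, hcd, Gab, Gcd, nGac, nGbd⟩
  have hlast : ∀ w : Fin n, (Fin.castSucc w) ≠ Fin.last n := fun w => (Fin.castSucc_lt_last w).ne
  refine ⟨Coloring.mk (fun v => if v = a ∨ v = b then Fin.last n else (C v).castSucc) ?_⟩
  intro u v huv
  rw [← mem_edgeSet, hE] at huv
  rcases huv with ⟨he, hne⟩ | (hm | hm)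
  · have hGuv : G.Adj u v := (G.mem_edgeSet).1 he
    by_cases hu : u = a ∨ u = b <;> by_cases hv : v = a ∨ v = b
    · exfalso
      rcases hu with rfl | rfl <;> rcases hv with rfl | rfl
      · exact hGuv.ne rfl
      · exact hne (Or.inl rfl)
      · exact hne (Or.inl Sym2.eq_swap)
      · exact hGuv.ne rfl
    · simp only [if_pos hu, if_neg hv]; exact (hlast _).symm
    · simp only [if_neg hu, if_pos hv]; exact hlast _
    · simp only [if_neg hu, if_neg hv]
      exact fun hh => C.valid hGuv (Fin.castSucc_injective _ hh)
  · rw [Sym2.eq_iff] at hm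
    rcases hm with ⟨rfl, rfl⟩ | ⟨rfl, rfl⟩
    · rw [if_pos (Or.inl rfl), if_neg (by push_neg; exact ⟨hac.symm, hbc.symm⟩)]
      exact (hlast _).symm
    · rw [if_neg (by push_neg; exact ⟨hac.symm, hbc.symm⟩), if_pos (Or.inl rfl)]
      exact hlast _
  · simp only [Set.mem_singleton_iff, Sym2.eq_iff] at hm
    rcases hm with ⟨rfl, rfl⟩ | ⟨rfl, rfl⟩
    · rw [if_pos (Or.inr rfl), if_neg (by push_neg; exact ⟨had.symm, hbd.symm⟩)]
      exact (hlast _).symm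
    · rw [if_neg (by push_neg; exact ⟨had.symm, hbd.symm⟩), if_pos (Or.inr rfl)]
      exact hlast _

lemma chrom_le {V : Type*} [Fintype V] {G G' : SimpleGraph V}
    (h : ObtainedByTwoSwitch G G') :
    G'.chromaticNumber ≤ G.chromaticNumber + 1 := by
  obtain ⟨a, b, c, d, hs, rfl⟩ := h
  have hne : G.chromaticNumber ≠ ⊤ :=
    (G.colorable_of_fintype.chromaticNumber_le.trans_lt (WithTop.coe_lt_top _)).ne
  calc (twoSwitch G a b c d).chromaticNumber
      ≤ ((G.chromaticNumber.toNat + 1 : ℕ) : ℕ∞) :=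
        (colorable_step hs (G.colorable_chromaticNumber_of_fintype)).chromaticNumber_le
    _ = G.chromaticNumber + 1 := by
        rw [Nat.cast_add, Nat.cast_one, ENat.coe_toNat hne]

/-- the chromatic number is stable under 2-switch, i.e.
`|χ(G') − χ(G)| ≤ 1`, stated by the two inequalities `χ(G') ≤ χ(G) + 1` and
`χ(G) ≤ χ(G') + 1`. -/

theorem stmt_18 {V : Type*} [Fintype V] (G G' : SimpleGraph V)
    (h : ObtainedByTwoSwitch G G') :
    G'.chromaticNumber ≤ G.chromaticNumber + 1 ∧
    G.chromaticNumber ≤ G'.chromaticNumber + 1 :=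
  ⟨chrom_le h, chrom_le (obtained_symm h)⟩
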